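/- Let x₁ = 2(y₁y₄+y₂y₃), x₂ = 2(y₂y₄−y₁y₃), x₃ = y₁²+y₂²−y₃²−y₄², Ψ = −2 arctan(y₁/y₂), r = y₁²+y₂²+y₃²+y₄². Then the pullback of the metric (r/4)(dΨ + A·dx)² + (1/(4r))dx·dx, with A₁ = x₂/(r(r+x₃)), A₂ = −x₁/(r(r+x₃)), A₃ = 0, equals the flat metric dy₁²+dy₂²+dy₃²+dy₄² (on the open set where y₂ ≠ 0 and r + x₃ > 0). -/

import Mathlib

noncomputable section

/-- The map x(y): x₁ = 2(y₁y₄+y₂y₃), x₂ = 2(y₂y₄−y₁y₃), x₃ = y₁²+y₂²−y₃²−y₄². -/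
def xmap (y : Fin 4 → ℝ) : Fin 3 → ℝ :=
  ![2 * (y 0 * y 3 + y 1 * y 2), 2 * (y 1 * y 3 - y 0 * y 2),
    y 0 ^ 2 + y 1 ^ 2 - y 2 ^ 2 - y 3 ^ 2]

/-- Ψ = −2 arctan(y₁/y₂). -/
def Psi (y : Fin 4 → ℝ) : ℝ := -2 * Real.arctan (y 0 / y 1)

/-- r = y₁²+y₂²+y₃²+y₄² (= |x|). -/
def rmap (y : Fin 4 → ℝ) : ℝ := y 0 ^ 2 + y 1 ^ 2 + y 2 ^ 2 + y 3 ^ 2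

/-- The Dirac monopole potential A₁ = x₂/(r(r+x₃)), A₂ = −x₁/(r(r+x₃)), A₃ = 0. -/
def Apot (y : Fin 4 → ℝ) : Fin 3 → ℝ :=
  ![xmap y 1 / (rmap y * (rmap y + xmap y 2)),
    -(xmap y 0) / (rmap y * (rmap y + xmap y 2)), 0]

/-- The pullback of the Gibbons–Hawking metric (r/4)(dΨ + A·dx)² + (1/(4r))dx·dx
under (y₁,…,y₄) ↦ (x, Ψ) equals the flat metric dy₁²+dy₂²+dy₃²+dy₄², on the
open set where y₂ ≠ 0 and r + x₃ > 0. -/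
theorem pullback_gibbons_hawking_metric_flat
    (y : Fin 4 → ℝ) (hy : y 1 ≠ 0) (hrx : 0 < rmap y + xmap y 2) (dy : Fin 4 → ℝ) :
    (rmap y / 4) *
        (fderiv ℝ Psi y dy + ∑ i, Apot y i * fderiv ℝ (fun y' => xmap y' i) y dy) ^ 2
      + (1 / (4 * rmap y)) * ∑ i, (fderiv ℝ (fun y' => xmap y' i) y dy) ^ 2
      = ∑ i, dy i ^ 2 := by
  have hp : ∀ i : Fin 4, HasFDerivAt (fun y' : Fin 4 → ℝ => y' i)
      (ContinuousLinearMap.proj (R := ℝ) (φ := fun _ : Fin 4 => ℝ) i) y :=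
    fun i => hasFDerivAt_apply i y
  have h0 := (((hp 0).mul (hp 3)).add ((hp 1).mul (hp 2))).const_mul (2:ℝ)
  have h1 := (((hp 1).mul (hp 3)).sub ((hp 0).mul (hp 2))).const_mul (2:ℝ)
  have h2 := ((((hp 0).mul (hp 0)).add ((hp 1).mul (hp 1))).sub ((hp 2).mul (hp 2))).sub ((hp 3).mul (hp 3))
  have e0 : (fun y' : Fin 4 → ℝ => xmap y' 0) = fun y' => 2 * (y' 0 * y' 3 + y' 1 * y' 2) := by
    funext y'; simp [xmap]
  have e1 : (fun y' : Fin 4 → ℝ => xmap y' 1) = fun y' => 2 * (y' 1 * y' 3 - y' 0 * y' 2) := by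
    funext y'; simp [xmap]
  have e2 : (fun y' : Fin 4 → ℝ => xmap y' 2) =
      fun y' => y' 0 * y' 0 + y' 1 * y' 1 - y' 2 * y' 2 - y' 3 * y' 3 := by
    funext y'; simp [xmap]; ring
  have f0 : fderiv ℝ (fun y' : Fin 4 → ℝ => xmap y' 0) y dy
      = 2 * (dy 0 * y 3 + y 0 * dy 3 + (dy 1 * y 2 + y 1 * dy 2)) := by
    rw [e0, HasFDerivAt.fderiv (f := fun y' : Fin 4 → ℝ => 2 * (y' 0 * y' 3 + y' 1 * y' 2)) h0]; simp; ring
  have f1 : fderiv ℝ (fun y' : Fin 4 → ℝ => xmap y' 1) y dy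
      = 2 * (dy 1 * y 3 + y 1 * dy 3 - (dy 0 * y 2 + y 0 * dy 2)) := by
    rw [e1, HasFDerivAt.fderiv (f := fun y' : Fin 4 → ℝ => 2 * (y' 1 * y' 3 - y' 0 * y' 2)) h1]; simp; ring
  have f2 : fderiv ℝ (fun y' : Fin 4 → ℝ => xmap y' 2) y dy
      = 2 * (y 0 * dy 0 + y 1 * dy 1 - y 2 * dy 2 - y 3 * dy 3) := by
    rw [e2, HasFDerivAt.fderiv (f := fun y' : Fin 4 → ℝ => y' 0 * y' 0 + y' 1 * y' 1 - y' 2 * y' 2 - y' 3 * y' 3) h2]; simp; ring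
  have hinv := (hasDerivAt_inv hy).comp_hasFDerivAt y (hp 1)
  have hdiv := (hp 0).mul hinv
  have harc := (Real.hasDerivAt_arctan (y 0 * (y 1)⁻¹)).comp_hasFDerivAt y hdiv
  have hPsi := harc.const_mul (-2 : ℝ)
  simp only [Function.comp_def] at hPsi
  have ePsi : Psi = fun y' : Fin 4 → ℝ =>
      -2 * Real.arctan (y' 0 * (y' 1)⁻¹) := by
    funext y'; simp [Psi, div_eq_mul_inv]
  have fPsi : fderiv ℝ Psi y dy
      = -2 * ((y 1 * dy 0 - y 0 * dy 1) / (y 0 ^ 2 + y 1 ^ 2)) := by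
    rw [ePsi, HasFDerivAt.fderiv (f := fun y' : Fin 4 → ℝ => -2 * Real.arctan (y' 0 * (y' 1)⁻¹)) hPsi]
    have hy2 : y 0 ^ 2 + y 1 ^ 2 ≠ 0 := by positivity
    simp [Function.comp]
    field_simp
    ring
  rw [Fin.sum_univ_three, Fin.sum_univ_three, Fin.sum_univ_four, f0, f1, f2, fPsi]
  have hy2 : (0:ℝ) < y 0 ^ 2 + y 1 ^ 2 := by positivity
  have hr : (0:ℝ) < rmap y := by
    have : rmap y + xmap y 2 = 2 * (y 0 ^ 2 + y 1 ^ 2) := by simp [rmap, xmap]; ring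
    simp [rmap]; positivity
  have hrx' : rmap y + xmap y 2 ≠ 0 := ne_of_gt hrx
  simp only [Apot, xmap, rmap, Matrix.cons_val_zero, Matrix.cons_val_one, Matrix.head_cons,
    Matrix.cons_val_two, Matrix.tail_cons] at *
  field_simp
  ring

end
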